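/- Let A = (Q, {0,1}, δ) be a binary automaton with p states whose shortest synchronizing word has length ℓ with ℓ ≤ p. Then there exist a binary weakly acyclic automaton A' with p(p + 1) states and a subset S' of p states of A' such that S' is synchronizing in A' and the shortest word synchronizing S' in A' has length exactly ℓ. (A' consists of p + 1 layers of copies q_i^{(j)} of the states of A, with δ'(q_i^{(j)}, x) = q_k^{(j+1)} whenever δ(q_i, x) = q_k for 1 ≤ j ≤ p, the last layer consisting of sink states, and S' being the first layer.) -/
import Mathlib


/-- The extension of the transition function to words. -/
def deltaStar {Q A : Type*} (δ : Q → A → Q) (q : Q) (w : List A) : Q := w.foldl δ q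

/-- A simple cycle: pairwise distinct states `q 0, …, q (k-1)` together with letters
mapping each state of the cycle to the next one (cyclically). -/
def IsSimpleCycle {Q A : Type*} (δ : Q → A → Q) (k : ℕ) (q : Fin k → Q) : Prop :=
  0 < k ∧ Function.Injective q ∧
    ∃ x : Fin k → A, ∀ i : Fin k, δ (q i) (x i) = q ⟨(i.val + 1) % k, Nat.mod_lt _ i.pos⟩

/-- An automaton is weakly acyclic if all its simple cycles are self-loops. -/
def WeaklyAcyclic {Q A : Type*} (δ : Q → A → Q) : Prop :=
  ∀ (k : ℕ) (q : Fin k → Q), IsSimpleCycle δ k q → k = 1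

/-- A sink state is fixed by every letter. -/
def IsSink {Q A : Type*} (δ : Q → A → Q) (q : Q) : Prop := ∀ x : A, δ q x = q

/-- The word `w` synchronizes the set `S` of states. -/
def SyncsSet {Q A : Type*} (δ : Q → A → Q) (S : Finset Q) (w : List A) : Prop :=
  ∃ q : Q, ∀ s ∈ S, deltaStar δ s w = q

/-- A set of states is synchronizing if some word synchronizes it. -/
def IsSyncSet {Q A : Type*} (δ : Q → A → Q) (S : Finset Q) : Prop :=
  ∃ w : List A, SyncsSet δ S w

/-- The rank of a word with respect to an automaton: the size of the image of the
state set under the word. -/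
def wordRank {Q A : Type*} [Fintype Q] [DecidableEq Q] (δ : Q → A → Q) (w : List A) : ℕ :=
  (Finset.univ.image fun q => deltaStar δ q w).card

/-- The rank of an automaton: the minimum rank of a word with respect to it. -/
noncomputable def autRank {Q A : Type*} [Fintype Q] [DecidableEq Q] (δ : Q → A → Q) : ℕ :=
  sInf {r | ∃ w : List A, wordRank δ w = r}

/-- The rank of a word with respect to a subset of states. -/
def subsetWordRank {Q A : Type*} [DecidableEq Q] (δ : Q → A → Q) (S : Finset Q)
    (w : List A) : ℕ :=
  (S.image fun q => deltaStar δ q w).card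

/-- The rank of a subset of states: the minimum rank of a word with respect to it. -/
noncomputable def subsetRank {Q A : Type*} [DecidableEq Q] (δ : Q → A → Q) (S : Finset Q) : ℕ :=
  sInf {r | ∃ w : List A, subsetWordRank δ S w = r}

/-- `w^j`: the word obtained by `j` concatenations of `w`. -/
def wordPow {A : Type*} (w : List A) (j : ℕ) : List A := (List.replicate j w).flatten

section Aux

variable {p : ℕ} (δ₀ : Fin p → Bool → Fin p)

/-- The layered automaton. -/
def layered : Fin p × Fin (p + 1) → Bool → Fin p × Fin (p + 1) := fun s x =>
  if h : s.2.val < p then (δ₀ s.1 x, ⟨s.2.val + 1, by omega⟩) else s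

lemma layered_deltaStar (w : List Bool) : ∀ (q : Fin p) (j : Fin (p + 1)),
    deltaStar (layered δ₀) (q, j) w =
      (deltaStar δ₀ q (w.take (p - j.val)), ⟨min (j.val + w.length) p, by omega⟩) := by
  induction w with
  | nil =>
    intro q j
    simp [deltaStar]
    exact Fin.ext (by have := j.isLt; simp; omega)
  | cons x w ih =>
    intro q j
    have hstep : deltaStar (layered δ₀) (q, j) (x :: w)
        = deltaStar (layered δ₀) (layered δ₀ (q, j) x) w := rfl
    by_cases h : j.val < p
    · rw [hstep]
      have : layered δ₀ (q, j) x = (δ₀ q x, ⟨j.val + 1, by omega⟩) := by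
        simp [layered, h]
      rw [this, ih]
      have htake : (x :: w).take (p - j.val) = x :: w.take (p - (j.val + 1)) := by
        have : p - j.val = (p - (j.val + 1)) + 1 := by omega
        rw [this, List.take_succ_cons]
      rw [htake]
      have : deltaStar δ₀ q (x :: w.take (p - (j.val + 1)))
          = deltaStar δ₀ (δ₀ q x) (w.take (p - (j.val + 1))) := rfl
      rw [this]
      exact congrArg _ (Fin.ext (by simp; omega))
    · have hj : j.val = p := by have := j.isLt; omega
      rw [hstep]
      have : layered δ₀ (q, j) x = (q, j) := by simp [layered, h]
      rw [this, ih]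
      have h0 : p - j.val = 0 := by omega
      rw [h0]
      simp only [List.take_zero]
      exact congrArg _ (Fin.ext (by simp; omega))

lemma layered_weaklyAcyclic : WeaklyAcyclic (layered δ₀) := by
  intro k q hcyc
  obtain ⟨hk, hinj, x, hx⟩ := hcyc
  -- layer is nondecreasing along transitions
  have hmono : ∀ i : Fin k, (q i).2.val ≤ (q ⟨(i.val + 1) % k, Nat.mod_lt _ i.pos⟩).2.val := by
    intro i
    rw [← hx i]
    by_cases h : (q i).2.val < p
    · simp [layered, h]
    · simp [layered, h]
  -- layers along indices 0..k-1 are monotone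
  have hchain : ∀ m : ℕ, (hm : m < k) → (q ⟨0, hk⟩).2.val ≤ (q ⟨m, hm⟩).2.val := by
    intro m
    induction m with
    | zero => intro hm; exact le_refl _
    | succ n ih =>
      intro hm
      have hn : n < k := by omega
      have := hmono ⟨n, hn⟩
      have hmod : (n + 1) % k = n + 1 := Nat.mod_eq_of_lt hm
      calc (q ⟨0, hk⟩).2.val ≤ (q ⟨n, hn⟩).2.val := ih hn
        _ ≤ (q ⟨(n + 1) % k, Nat.mod_lt _ hk⟩).2.val := this
        _ = (q ⟨n + 1, hm⟩).2.val := by apply congrArg (fun s => (q s).2.val); exact Fin.ext hmod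
  -- the last wraps around to 0
  have hlast : k - 1 < k := by omega
  have hwrap : (q ⟨k - 1, hlast⟩).2.val ≤ (q ⟨0, hk⟩).2.val := by
    have := hmono ⟨k - 1, hlast⟩
    have hmod : (k - 1 + 1) % k = 0 := by
      have : k - 1 + 1 = k := by omega
      rw [this, Nat.mod_self]
    calc (q ⟨k - 1, hlast⟩).2.val
        ≤ (q ⟨(k - 1 + 1) % k, Nat.mod_lt _ hk⟩).2.val := this
      _ = (q ⟨0, hk⟩).2.val := by apply congrArg (fun s => (q s).2.val); exact Fin.ext hmod
  -- hence every layer equals layer of 0 ; each transition preserves layer ⇒ layer = p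
  have hconst : ∀ i : Fin k, (q i).2.val = (q ⟨0, hk⟩).2.val := by
    intro i
    have h1 := hchain i.val i.isLt
    have h2 : (q ⟨i.val, i.isLt⟩).2.val ≤ (q ⟨k - 1, hlast⟩).2.val := by
      -- chain from i to k-1
      have gen : ∀ d : ℕ, (hd : i.val + d < k) →
          (q i).2.val ≤ (q ⟨i.val + d, hd⟩).2.val := by
        intro d
        induction d with
        | zero => intro hd; exact le_of_eq (congrArg (fun s => (q s).2.val) (Fin.ext rfl))
        | succ n ih =>
          intro hd
          have hn : i.val + n < k := by omega
          have := hmono ⟨i.val + n, hn⟩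
          have hmod : (i.val + n + 1) % k = i.val + n + 1 := Nat.mod_eq_of_lt (by omega)
          calc (q i).2.val ≤ (q ⟨i.val + n, hn⟩).2.val := ih hn
            _ ≤ (q ⟨(i.val + n + 1) % k, Nat.mod_lt _ hk⟩).2.val := this
            _ = (q ⟨i.val + n + 1, by omega⟩).2.val := by
                apply congrArg (fun s => (q s).2.val); exact Fin.ext hmod
      have hd : i.val + (k - 1 - i.val) < k := by omega
      have := gen (k - 1 - i.val) hd
      have heq : i.val + (k - 1 - i.val) = k - 1 := by omega
      calc (q ⟨i.val, i.isLt⟩).2.val = (q i).2.val := by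
              exact congrArg (fun s => (q s).2.val) (Fin.ext rfl)
        _ ≤ (q ⟨i.val + (k - 1 - i.val), hd⟩).2.val := this
        _ = (q ⟨k - 1, hlast⟩).2.val := by apply congrArg (fun s => (q s).2.val); exact Fin.ext heq
    have : (q ⟨i.val, i.isLt⟩).2.val = (q i).2.val :=
      congrArg (fun s => (q s).2.val) (Fin.ext rfl)
    omega
  -- each transition preserves layer ⇒ all layers = p ⇒ fixed points
  have hfix : ∀ i : Fin k, (q i).2.val = p := by
    intro i
    by_contra h
    have hlt : (q i).2.val < p := by have := (q i).2.isLt; omega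
    have := hx i
    have hlay : (layered δ₀ (q i) (x i)).2.val = (q i).2.val + 1 := by
      simp [layered, hlt]
    rw [this] at hlay
    have := hconst i
    have := hconst ⟨(i.val + 1) % k, Nat.mod_lt _ i.pos⟩
    omega
  -- so transitions fix states
  have hfixed : ∀ i : Fin k, q ⟨(i.val + 1) % k, Nat.mod_lt _ i.pos⟩ = q i := by
    intro i
    rw [← hx i]
    have : ¬ (q i).2.val < p := by rw [hfix i]; omega
    simp [layered, this]
  by_contra hk1
  have hk2 : 2 ≤ k := by omega
  have h1 : (1 : ℕ) < k := hk2
  have := hfixed ⟨0, hk⟩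
  have hmod : (0 + 1) % k = 1 := by rw [Nat.mod_eq_of_lt (by omega)]
  have heq : q ⟨1, h1⟩ = q ⟨0, hk⟩ := by
    rw [← this]; exact congrArg q (Fin.ext (by simp [hmod]))
  have := hinj heq
  simp [Fin.ext_iff] at this

end Aux

/-- From a binary `p`-state automaton whose shortest synchronizing word has length
`ℓ ≤ p`, one obtains a binary weakly acyclic automaton with `p(p+1)` states and a
synchronizing subset of `p` states whose shortest synchronizing word has length
exactly `ℓ`. -/
theorem stmt10 {Q : Type*} [Fintype Q] (δ : Q → Bool → Q) (p ℓ : ℕ)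
    (hp : Fintype.card Q = p) (hℓp : ℓ ≤ p)
    (hex : ∃ w : List Bool, w.length = ℓ ∧ ∃ q : Q, ∀ r : Q, deltaStar δ r w = q)
    (hmin : ∀ w : List Bool, (∃ q : Q, ∀ r : Q, deltaStar δ r w = q) → ℓ ≤ w.length) :
    ∃ (Q' : Type) (inst : Fintype Q') (δ' : Q' → Bool → Q') (S' : Finset Q'),
      @Fintype.card Q' inst = p * (p + 1) ∧ WeaklyAcyclic δ' ∧ S'.card = p ∧
      IsSyncSet δ' S' ∧
      (∃ w : List Bool, SyncsSet δ' S' w ∧ w.length = ℓ) ∧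
      (∀ w : List Bool, SyncsSet δ' S' w → ℓ ≤ w.length) := by
  classical
  obtain ⟨w₀, hw₀len, q₀, hq₀⟩ := hex
  have hQ : Nonempty Q := ⟨q₀⟩
  have hp0 : 0 < p := hp ▸ Fintype.card_pos
  -- transfer to Fin p
  let e : Q ≃ Fin p := Fintype.equivFinOfCardEq hp
  set δ₀ : Fin p → Bool → Fin p := fun i x => e (δ (e.symm i) x) with hδ₀
  have hconj : ∀ (w : List Bool) (q : Q), deltaStar δ₀ (e q) w = e (deltaStar δ q w) := by
    intro w
    induction w with
    | nil => intro q; rfl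
    | cons x w ih =>
      intro q
      have h1 : deltaStar δ₀ (e q) (x :: w) = deltaStar δ₀ (δ₀ (e q) x) w := rfl
      have h2 : deltaStar δ (q) (x :: w) = deltaStar δ (δ q x) w := rfl
      rw [h1, h2]
      have : δ₀ (e q) x = e (δ q x) := by simp [hδ₀]
      rw [this, ih]
  -- sync properties for δ₀
  have hsync₀ : ∀ w : List Bool, (∃ c : Fin p, ∀ r : Fin p, deltaStar δ₀ r w = c) ↔
      (∃ c : Q, ∀ r : Q, deltaStar δ r w = c) := by
    intro w
    constructor
    · rintro ⟨c, hc⟩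
      exact ⟨e.symm c, fun r => by
        have := hc (e r); rw [hconj] at this
        exact e.injective (by rw [this]; simp)⟩
    · rintro ⟨c, hc⟩
      exact ⟨e c, fun r => by rw [← e.apply_symm_apply r, hconj, hc]⟩
  -- the construction
  refine ⟨Fin p × Fin (p + 1), inferInstance, layered δ₀,
    Finset.univ.image (fun i : Fin p => (i, (0 : Fin (p + 1)))), ?_, layered_weaklyAcyclic δ₀,
    ?_, ?_, ?_, ?_⟩
  · simp
  · rw [Finset.card_image_of_injective _ (fun a b h => by simpa using congrArg Prod.fst h)]
    simp
  · -- IsSyncSet: use w₀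
    refine ⟨w₀, ?_⟩
    obtain ⟨c, hc⟩ := (hsync₀ w₀).2 ⟨q₀, hq₀⟩
    refine ⟨(c, ⟨min w₀.length p, by omega⟩), ?_⟩
    intro s hs
    simp only [Finset.mem_image, Finset.mem_univ, true_and] at hs
    obtain ⟨i, rfl⟩ := hs
    rw [layered_deltaStar]
    have : p - (0 : Fin (p+1)).val = p := by simp
    rw [this, List.take_of_length_le (by omega), hc]
    simp
  · -- word of length exactly ℓ
    refine ⟨w₀, ?_, hw₀len⟩
    obtain ⟨c, hc⟩ := (hsync₀ w₀).2 ⟨q₀, hq₀⟩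
    refine ⟨(c, ⟨min w₀.length p, by omega⟩), ?_⟩
    intro s hs
    simp only [Finset.mem_image, Finset.mem_univ, true_and] at hs
    obtain ⟨i, rfl⟩ := hs
    rw [layered_deltaStar]
    have : p - (0 : Fin (p+1)).val = p := by simp
    rw [this, List.take_of_length_le (by omega), hc]
    simp
  · -- minimality
    intro w hw
    obtain ⟨c, hc⟩ := hw
    have hmem : ∀ i : Fin p, (i, (0 : Fin (p + 1))) ∈
        Finset.univ.image (fun i : Fin p => (i, (0 : Fin (p + 1)))) := by
      intro i; simp
    have hall : ∀ i : Fin p, deltaStar δ₀ i (w.take p) = c.1 := by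
      intro i
      have := hc _ (hmem i)
      rw [layered_deltaStar] at this
      have h0 : p - (0 : Fin (p+1)).val = p := by simp
      rw [h0] at this
      exact congrArg Prod.fst this
    have := hmin (w.take p) ((hsync₀ (w.take p)).1 ⟨c.1, hall⟩)
    have hlen : (w.take p).length ≤ w.length := by
      rw [List.length_take]; omega
    omega
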